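/- Under the trajectory setup, let ε ≥ 0 and R_max ≥ 0, and define Π_ne to be the set of policies π : S → PMF A such that ∑_{τ} q_π(τ) · ∑_{t=1}^{T−1} KL(q_dyn(· | s_t, a_t) ‖ p_dyn(· | s_t, a_t)) ≤ ε. Assume that for every π ∈ Π_ne and every trajectory τ with q_π(τ) > 0 or p_π(τ) > 0 one has |R_π(τ)| ≤ R_max. Suppose π_DARC ∈ Π_ne maximizes the source entropy-regularized return J_src(π) = ∑_τ q_π(τ) · R_π(τ) over Π_ne, and suppose π* ∈ Π_ne. Then, writing J_tgt(π) = ∑_τ p_π(τ) · R_π(τ), it holds that J_tgt(π_DARC) ≥ J_tgt(π*) − 4 · R_max · √(ε / 2). -/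

import Mathlib

open Finset

/-- KL divergence between two probability mass functions on a finite type,
with the convention `0 · log 0 = 0` (which holds automatically in `ℝ`). -/
noncomputable def KL {X : Type*} [Fintype X] (μ ν : PMF X) : ℝ :=
  ∑ x, (μ x).toReal * Real.log ((μ x).toReal / (ν x).toReal)

/-- The index `t` of a trajectory, regarded inside `Fin T`. -/
def idx1 {T : ℕ} (t : Fin (T - 1)) : Fin T := ⟨t.1, by have := t.2; omega⟩

/-- The index `t + 1` of a trajectory, regarded inside `Fin T`. -/
def idx2 {T : ℕ} (t : Fin (T - 1)) : Fin T := ⟨t.1 + 1, by have := t.2; omega⟩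

/-- Probability of the trajectory `τ = (s₁, a₁, …, s_T, a_T)` under initial
distribution `p₁`, dynamics `dyn` and policy `π`:
`p₁(s₁) · ∏_{t=1}^{T} π(a_t|s_t) · ∏_{t=1}^{T−1} dyn(s_{t+1}|s_t,a_t)`. -/
noncomputable def trajProb {S A : Type*} {T : ℕ} (hT : 1 ≤ T)
    (p₁ : PMF S) (dyn : S → A → PMF S) (π : S → PMF A)
    (τ : Fin T → S × A) : ℝ :=
  (p₁ (τ ⟨0, hT⟩).1).toReal
    * (∏ t : Fin T, (π (τ t).1 (τ t).2).toReal)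
    * (∏ t : Fin (T - 1), (dyn (τ (idx1 t)).1 (τ (idx1 t)).2 (τ (idx2 t)).1).toReal)

/-- Entropy-regularized return of a trajectory:
`∑_{t=1}^{T} (r(s_t,a_t) − log π(a_t|s_t))`. -/
noncomputable def entReturn {S A : Type*} {T : ℕ}
    (r : S → A → ℝ) (π : S → PMF A) (τ : Fin T → S × A) : ℝ :=
  ∑ t : Fin T, (r (τ t).1 (τ t).2 - Real.log ((π (τ t).1 (τ t).2)).toReal)

/-- The DARC reward correction `Δr(s,a,s') = log p_dyn(s'|s,a) − log q_dyn(s'|s,a)`. -/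
noncomputable def Δr {S A : Type*} (qdyn pdyn : S → A → PMF S)
    (s : S) (a : A) (s' : S) : ℝ :=
  Real.log ((pdyn s a s').toReal) - Real.log ((qdyn s a s').toReal)

/-- Expected (under the source trajectory distribution) sum of per-step KL
divergences between source and target dynamics. -/
noncomputable def expKL {S A : Type*} [Fintype S] [Fintype A] {T : ℕ}
    (hT : 1 ≤ T) (p₁ : PMF S) (qdyn pdyn : S → A → PMF S) (π : S → PMF A) : ℝ :=
  ∑ τ : Fin T → S × A, trajProb hT p₁ qdyn π τ *
    ∑ t : Fin (T - 1),
      KL (qdyn (τ (idx1 t)).1 (τ (idx1 t)).2) (pdyn (τ (idx1 t)).1 (τ (idx1 t)).2)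

/-- Theorem 4.1 of "Off-Dynamics Reinforcement Learning": if `π_DARC` maximizes
the source entropy-regularized return over the set `Π_ne` of non-exploiting
policies (those with expected per-step dynamics KL at most `ε`), and the
target-optimal policy `π*` also lies in `Π_ne` (Assumption 4.1), then `π_DARC`
is `4 R_max √(ε/2)`-optimal for the target entropy-regularized return. -/
lemma mul_log_div_ge {qi pi Q P : ℝ} (hqi : 0 ≤ qi) (hpi : 0 ≤ pi)
    (hz : pi = 0 → qi = 0) (hQ : 0 < Q) (hP : 0 < P) :
    qi * Real.log (Q / P) + qi - (Q / P) * pi ≤ qi * Real.log (qi / pi) := by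
  rcases eq_or_lt_of_le hqi with h0 | hqi'
  · have : (0:ℝ) ≤ (Q/P) * pi := by positivity
    simp [← h0]
    linarith
  · have hpi' : 0 < pi := by
      rcases eq_or_lt_of_le hpi with h | h
      · exact absurd (hz h.symm) (ne_of_gt hqi')
      · exact h
    have hx : 0 < qi / pi / (Q / P) := by positivity
    have h1 := Real.one_sub_inv_le_log_of_pos hx
    rw [Real.log_div (by positivity) (by positivity)] at h1
    have e : (qi / pi / (Q / P))⁻¹ = (Q / P) * pi / qi := by
      field_simp
    rw [e] at h1
    have h2 := mul_le_mul_of_nonneg_left h1 hqi'.le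
    have e2 : qi * (1 - (Q / P) * pi / qi) = qi - (Q/P) * pi := by
      field_simp
    rw [e2, mul_sub] at h2
    linarith

lemma log_sum_ineq {X : Type*} (s : Finset X) (q p : X → ℝ)
    (hq : ∀ x ∈ s, 0 ≤ q x) (hp : ∀ x ∈ s, 0 ≤ p x)
    (hz : ∀ x ∈ s, p x = 0 → q x = 0) :
    (∑ x ∈ s, q x) * Real.log ((∑ x ∈ s, q x) / (∑ x ∈ s, p x))
      ≤ ∑ x ∈ s, q x * Real.log (q x / p x) := by
  set Q := ∑ x ∈ s, q x with hQdef
  set P := ∑ x ∈ s, p x with hPdef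
  rcases eq_or_lt_of_le (Finset.sum_nonneg hq) with hQ0 | hQ
  · rw [show Q = 0 from hQ0.symm]
    have : ∀ x ∈ s, q x = 0 := by
      intro x hx
      exact (Finset.sum_eq_zero_iff_of_nonneg hq).mp hQ0.symm x hx
    have : ∑ x ∈ s, q x * Real.log (q x / p x) = 0 :=
      Finset.sum_eq_zero fun x hx => by rw [this x hx, zero_mul]
    rw [this, zero_mul]
  · have hP : 0 < P := by
      rcases eq_or_lt_of_le (Finset.sum_nonneg hp) with hP0 | h
      · exfalso
        have hall : ∀ x ∈ s, p x = 0 := (Finset.sum_eq_zero_iff_of_nonneg hp).mp hP0.symm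
        have : Q = 0 := Finset.sum_eq_zero fun x hx => hz x hx (hall x hx)
        exact absurd this (ne_of_gt hQ)
      · exact h
    have key : ∑ x ∈ s, (q x * Real.log (Q / P) + q x - (Q / P) * p x)
        ≤ ∑ x ∈ s, q x * Real.log (q x / p x) :=
      Finset.sum_le_sum fun x hx => mul_log_div_ge (hq x hx) (hp x hx) (hz x hx) hQ hP
    have expand : ∑ x ∈ s, (q x * Real.log (Q / P) + q x - (Q / P) * p x)
        = Q * Real.log (Q / P) + Q - (Q / P) * P := by
      rw [Finset.sum_sub_distrib, Finset.sum_add_distrib, ← Finset.sum_mul, ← Finset.mul_sum]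
    have : (Q / P) * P = Q := by field_simp
    rw [expand, this] at key
    linarith

private noncomputable def gfun (b : ℝ) : ℝ → ℝ := fun x =>
  x * Real.log x - x * Real.log b + (1 - x) * Real.log (1 - x)
    - (1 - x) * Real.log (1 - b) - 2 * (x - b) ^ 2

private lemma gfun_cont (b : ℝ) : Continuous (gfun b) := by
  unfold gfun
  exact ((((Real.continuous_mul_log).sub (continuous_id.mul continuous_const)).add
    (Real.continuous_mul_log.comp (continuous_const.sub continuous_id))).sub
    ((continuous_const.sub continuous_id).mul continuous_const)).sub
    (continuous_const.mul ((continuous_id.sub continuous_const).pow 2))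

private lemma gfun_hasDeriv (b : ℝ) {x : ℝ} (hx0 : 0 < x) (hx1 : x < 1) :
    HasDerivAt (gfun b)
      (Real.log x - Real.log b - Real.log (1 - x) + Real.log (1 - b) - 4 * (x - b)) x := by
  have h1 : HasDerivAt (fun y : ℝ => y * Real.log y) (Real.log x + 1) x :=
    Real.hasDerivAt_mul_log hx0.ne'
  have hin : HasDerivAt (fun y : ℝ => 1 - y) (-1) x := (hasDerivAt_id x).const_sub 1
  have h2 : HasDerivAt (fun y : ℝ => (1 - y) * Real.log (1 - y))
      ((Real.log (1 - x) + 1) * (-1)) x := by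
    have := (Real.hasDerivAt_mul_log (by linarith : (1:ℝ) - x ≠ 0)).comp x hin
    exact this
  have h3 : HasDerivAt (fun y : ℝ => y * Real.log b) (Real.log b) x := by
    simpa using (hasDerivAt_id x).mul_const (Real.log b)
  have h4 : HasDerivAt (fun y : ℝ => (1 - y) * Real.log (1 - b)) (-Real.log (1 - b)) x := by
    simpa using hin.mul_const (Real.log (1 - b))
  have h5 : HasDerivAt (fun y : ℝ => 2 * (y - b) ^ 2) (2 * (2 * (x - b))) x := by
    have h6 : HasDerivAt (fun y : ℝ => (y - b) ^ 2) (2 * (x - b) ^ 1 * 1) x :=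
      ((hasDerivAt_id x).sub_const b).pow 2
    simpa [mul_comm, mul_assoc, mul_left_comm] using h6.const_mul 2
  have := ((((h1.sub h3).add h2).sub h4).sub h5)
  refine this.congr_deriv ?_
  ring

private lemma hfun_mono : MonotoneOn
    (fun x : ℝ => Real.log x - Real.log (1 - x) - 4 * x) (Set.Ioo 0 1) := by
  have hderiv : ∀ x ∈ Set.Ioo (0:ℝ) 1, HasDerivAt
      (fun x : ℝ => Real.log x - Real.log (1 - x) - 4 * x)
      (x⁻¹ - (1 - x)⁻¹ * (-1) - 4) x := by
    intro x hx
    obtain ⟨hx0, hx1⟩ := hx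
    have ha : HasDerivAt Real.log x⁻¹ x := Real.hasDerivAt_log hx0.ne'
    have hb : HasDerivAt (fun y : ℝ => Real.log (1 - y)) ((1 - x)⁻¹ * (-1)) x :=
      (Real.hasDerivAt_log (by linarith : (1:ℝ) - x ≠ 0)).comp x
        ((hasDerivAt_id x).const_sub 1)
    exact ((ha.sub hb).sub ((hasDerivAt_id x).const_mul 4)).congr_deriv (by ring)
  apply monotoneOn_of_deriv_nonneg (convex_Ioo 0 1)
  · intro x hx
    exact (hderiv x hx).continuousAt.continuousWithinAt
  · intro x hx
    rw [interior_Ioo] at hx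
    exact (hderiv x hx).differentiableAt.differentiableWithinAt
  · intro x hx
    rw [interior_Ioo] at hx
    rw [(hderiv x hx).deriv]
    obtain ⟨hx0, hx1⟩ := hx
    have h1x : (0:ℝ) < 1 - x := by linarith
    have key : (4:ℝ) ≤ x⁻¹ + (1 - x)⁻¹ := by
      rw [inv_eq_one_div, inv_eq_one_div, div_add_div _ _ (ne_of_gt hx0) (ne_of_gt h1x),
        le_div_iff₀ (by positivity)]
      nlinarith [sq_nonneg (2 * x - 1)]
    linarith

lemma binary_pinsker {a b : ℝ} (ha0 : 0 ≤ a) (ha1 : a ≤ 1) (hb0 : 0 < b) (hb1 : b < 1) :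
    2 * (a - b) ^ 2 ≤ a * Real.log (a / b) + (1 - a) * Real.log ((1 - a) / (1 - b)) := by
  have h1b : (0:ℝ) < 1 - b := by linarith
  have hgb : gfun b b = 0 := by unfold gfun; ring
  have key : 0 ≤ gfun b a := by
    rcases le_total a b with hab | hab
    · -- g antitone on [0, b]
      have hanti : AntitoneOn (gfun b) (Set.Icc 0 b) := by
        apply antitoneOn_of_deriv_nonpos (convex_Icc 0 b) (gfun_cont b).continuousOn
        · intro x hx
          rw [interior_Icc] at hx
          exact (gfun_hasDeriv b hx.1 (by linarith [hx.2])).differentiableAt.differentiableWithinAt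
        · intro x hx
          rw [interior_Icc] at hx
          obtain ⟨hx0, hxb⟩ := hx
          rw [(gfun_hasDeriv b hx0 (by linarith)).deriv]
          have := hfun_mono ⟨hx0, by linarith⟩ ⟨hb0, hb1⟩ hxb.le
          simp only at this
          linarith
      have := hanti ⟨ha0, hab⟩ ⟨le_of_lt hb0, le_refl b⟩ hab
      rw [hgb] at this; exact this
    · -- g monotone on [b, 1]
      have hmono : MonotoneOn (gfun b) (Set.Icc b 1) := by
        apply monotoneOn_of_deriv_nonneg (convex_Icc b 1) (gfun_cont b).continuousOn
        · intro x hx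
          rw [interior_Icc] at hx
          exact (gfun_hasDeriv b (by linarith [hx.1]) hx.2).differentiableAt.differentiableWithinAt
        · intro x hx
          rw [interior_Icc] at hx
          obtain ⟨hxb, hx1⟩ := hx
          rw [(gfun_hasDeriv b (by linarith) hx1).deriv]
          have := hfun_mono ⟨hb0, hb1⟩ ⟨by linarith, hx1⟩ hxb.le
          simp only at this
          linarith
      have := hmono ⟨le_refl b, hb1.le⟩ ⟨hab, ha1⟩ hab
      rw [hgb] at this; exact this
  have expand : a * Real.log (a / b) + (1 - a) * Real.log ((1 - a) / (1 - b))
      - 2 * (a - b) ^ 2 = gfun b a := by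
    unfold gfun
    have e1 : (1:ℝ) - b ≠ 0 := by linarith
    rcases eq_or_lt_of_le ha0 with h | h
    · rw [← h]
      have : Real.log ((1 - 0) / (1 - b)) = Real.log (1 - 0) - Real.log (1 - b) :=
        Real.log_div (by norm_num) e1
      rw [this]
      simp
    · rcases eq_or_lt_of_le ha1 with h1 | h1
      · rw [h1]
        have : Real.log (1 / b) = Real.log 1 - Real.log b :=
          Real.log_div one_ne_zero (ne_of_gt hb0)
        rw [this]
        simp
      · rw [Real.log_div (by linarith) (by linarith),
          Real.log_div (by linarith) e1]
        ring
  linarith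

lemma pinsker_finite {X : Type*} [Fintype X] (q p : X → ℝ)
    (hq0 : ∀ x, 0 ≤ q x) (hp0 : ∀ x, 0 ≤ p x)
    (hq1 : ∑ x, q x = 1) (hp1 : ∑ x, p x = 1)
    (hz : ∀ x, p x = 0 → q x = 0) :
    ∑ x, |q x - p x| ≤ Real.sqrt (2 * ∑ x, q x * Real.log (q x / p x)) := by
  classical
  set Aset : Finset X := Finset.univ.filter (fun x => p x ≤ q x) with hAdef
  set a : ℝ := ∑ x ∈ Aset, q x with ha
  set b : ℝ := ∑ x ∈ Aset, p x with hb
  have hsplitq : a + ∑ x ∈ Finset.univ.filter (fun x => ¬ p x ≤ q x), q x = 1 := by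
    rw [ha, Finset.sum_filter_add_sum_filter_not]; exact hq1
  have hsplitp : b + ∑ x ∈ Finset.univ.filter (fun x => ¬ p x ≤ q x), p x = 1 := by
    rw [hb, Finset.sum_filter_add_sum_filter_not]; exact hp1
  have ha0 : 0 ≤ a := Finset.sum_nonneg fun x _ => hq0 x
  have hb0 : 0 ≤ b := Finset.sum_nonneg fun x _ => hp0 x
  have ha1 : a ≤ 1 := by
    have : 0 ≤ ∑ x ∈ Finset.univ.filter (fun x => ¬ p x ≤ q x), q x :=
      Finset.sum_nonneg fun x _ => hq0 x
    linarith
  have hb1 : b ≤ 1 := by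
    have : 0 ≤ ∑ x ∈ Finset.univ.filter (fun x => ¬ p x ≤ q x), p x :=
      Finset.sum_nonneg fun x _ => hp0 x
    linarith
  have hba : b ≤ a := by
    have : ∀ x ∈ Aset, p x ≤ q x := fun x hx => (Finset.mem_filter.mp hx).2
    exact Finset.sum_le_sum this
  -- total variation
  have habs : ∑ x, |q x - p x| = 2 * (a - b) := by
    rw [← Finset.sum_filter_add_sum_filter_not Finset.univ (fun x => p x ≤ q x)
      (fun x => |q x - p x|)]
    have h1 : ∑ x ∈ Aset, |q x - p x| = a - b := by
      rw [ha, hb, ← Finset.sum_sub_distrib]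
      exact Finset.sum_congr rfl fun x hx =>
        abs_of_nonneg (by linarith [(Finset.mem_filter.mp hx).2])
    have h2 : ∑ x ∈ Finset.univ.filter (fun x => ¬ p x ≤ q x), |q x - p x|
        = (1 - b) - (1 - a) := by
      rw [show (1:ℝ) - b - (1 - a) = ∑ x ∈ Finset.univ.filter (fun x => ¬ p x ≤ q x), p x
          - ∑ x ∈ Finset.univ.filter (fun x => ¬ p x ≤ q x), q x by linarith,
        ← Finset.sum_sub_distrib]
      exact Finset.sum_congr rfl fun x hx => by
        have := (Finset.mem_filter.mp hx).2
        rw [abs_of_neg (by linarith [lt_of_not_ge this])]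
        ring
    rw [h1, h2]; ring
  -- KL lower bound via log-sum on both parts
  have hKL : a * Real.log (a / b) + (1 - a) * Real.log ((1 - a) / (1 - b))
      ≤ ∑ x, q x * Real.log (q x / p x) := by
    rw [← Finset.sum_filter_add_sum_filter_not Finset.univ (fun x => p x ≤ q x)
      (fun x => q x * Real.log (q x / p x))]
    have h1 := log_sum_ineq Aset q p (fun x _ => hq0 x) (fun x _ => hp0 x)
      (fun x _ => hz x)
    have h2 := log_sum_ineq (Finset.univ.filter (fun x => ¬ p x ≤ q x)) q p
      (fun x _ => hq0 x) (fun x _ => hp0 x) (fun x _ => hz x)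
    rw [show ∑ x ∈ Finset.univ.filter (fun x => ¬ p x ≤ q x), q x = 1 - a by linarith,
      show ∑ x ∈ Finset.univ.filter (fun x => ¬ p x ≤ q x), p x = 1 - b by linarith] at h2
    exact add_le_add h1 h2
  -- binary pinsker with edge cases
  have hbin : 2 * (a - b) ^ 2 ≤ a * Real.log (a / b) + (1 - a) * Real.log ((1 - a) / (1 - b)) := by
    rcases eq_or_lt_of_le hb0 with hb00 | hbpos
    · -- b = 0 → a = 0
      have hA0 : a = 0 := by
        have hall : ∀ x ∈ Aset, p x = 0 :=
          (Finset.sum_eq_zero_iff_of_nonneg (fun x _ => hp0 x)).mp hb00.symm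
        exact Finset.sum_eq_zero fun x hx => hz x (hall x hx)
      rw [hA0, ← hb00]
      simp
    · rcases eq_or_lt_of_le hb1 with hb11 | hb1'
      · -- b = 1 → a = 1
        have hA1 : a = 1 := by
          have h0 : ∑ x ∈ Finset.univ.filter (fun x => ¬ p x ≤ q x), p x = 0 := by linarith
          have hall : ∀ x ∈ Finset.univ.filter (fun x => ¬ p x ≤ q x), p x = 0 :=
            (Finset.sum_eq_zero_iff_of_nonneg (fun x _ => hp0 x)).mp h0
          have : ∑ x ∈ Finset.univ.filter (fun x => ¬ p x ≤ q x), q x = 0 :=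
            Finset.sum_eq_zero fun x hx => hz x (hall x hx)
          linarith
        rw [hA1, hb11]
        simp
      · exact binary_pinsker ha0 ha1 hbpos hb1'
  have hKL0 : 2 * (a - b) ^ 2 ≤ ∑ x, q x * Real.log (q x / p x) := le_trans hbin hKL
  rw [habs]
  rw [show (2:ℝ) * (a - b) = √((2 * (a-b))^2) from (Real.sqrt_sq (by linarith)).symm]
  apply Real.sqrt_le_sqrt
  nlinarith

lemma pmf_sum_toReal {X : Type*} [Fintype X] (μ : PMF X) : ∑ x, (μ x).toReal = 1 := by
  have h := μ.tsum_coe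
  rw [tsum_fintype] at h
  rw [← ENNReal.toReal_sum (fun x _ => PMF.apply_ne_top μ x), h, ENNReal.toReal_one]

lemma sum_prod_pmf {S A : Type*} [Fintype S] [Fintype A] (μ : PMF S) (κ : S → PMF A) :
    ∑ x : S × A, (μ x.1).toReal * (κ x.1 x.2).toReal = 1 := by
  rw [Fintype.sum_prod_type]
  have : ∀ s, ∑ a, (μ s).toReal * (κ s a).toReal = (μ s).toReal := by
    intro s
    rw [← Finset.mul_sum, pmf_sum_toReal, mul_one]
  simp only [this]
  exact pmf_sum_toReal μ

def snocEquiv (X : Type*) (n : ℕ) : ((Fin n → X) × X) ≃ (Fin (n+1) → X) where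
  toFun p := Fin.snoc p.1 p.2
  invFun τ := (fun i => τ i.castSucc, τ (Fin.last n))
  left_inv p := by
    obtain ⟨τ', x⟩ := p
    refine Prod.ext ?_ ?_
    · funext i; simp [Fin.snoc_castSucc]
    · simp [Fin.snoc_last]
  right_inv τ := by
    funext i
    refine Fin.lastCases ?_ (fun j => ?_) i
    · simp [Fin.snoc_last]
    · simp [Fin.snoc_castSucc]

lemma sum_snoc {X : Type*} [Fintype X] {n : ℕ} (f : (Fin (n+1) → X) → ℝ) :
    ∑ τ : Fin (n+1) → X, f τ = ∑ τ' : Fin n → X, ∑ x : X, f (Fin.snoc τ' x) := by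
  rw [← Equiv.sum_comp (snocEquiv X n) f, Fintype.sum_prod_type]
  rfl

lemma idx1_castSucc {n : ℕ} (t : Fin n) :
    idx1 (T := n + 2) (Fin.castSucc t) = Fin.castSucc (idx1 (T := n + 1) t) := rfl

lemma idx2_castSucc {n : ℕ} (t : Fin n) :
    idx2 (T := n + 2) (Fin.castSucc t) = Fin.castSucc (idx2 (T := n + 1) t) := rfl

lemma idx1_last {n : ℕ} :
    idx1 (T := n + 2) (Fin.last n) = Fin.castSucc (Fin.last n) := rfl

lemma idx2_last {n : ℕ} :
    idx2 (T := n + 2) (Fin.last n) = Fin.last (n + 1) := rfl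

lemma trajProb_snoc {S A : Type*} {n : ℕ} (h2 : 1 ≤ n + 2) (h1 : 1 ≤ n + 1)
    (p₁ : PMF S) (d : S → A → PMF S) (π : S → PMF A)
    (τ' : Fin (n + 1) → S × A) (x : S × A) :
    trajProb h2 p₁ d π (Fin.snoc τ' x) =
      trajProb h1 p₁ d π τ' *
        (d (τ' (Fin.last n)).1 (τ' (Fin.last n)).2 x.1).toReal * (π x.1 x.2).toReal := by
  set σ : Fin (n + 2) → S × A := Fin.snoc τ' x with hσ
  have hcs : ∀ t : Fin (n + 1), σ (Fin.castSucc t) = τ' t := fun t => by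
    rw [hσ, Fin.snoc_castSucc]
  have hlast : σ (Fin.last (n + 1)) = x := by rw [hσ, Fin.snoc_last]
  have hdef : trajProb h2 p₁ d π σ
      = (p₁ (σ (Fin.castSucc (⟨0, h1⟩ : Fin (n + 1)))).1).toReal
        * (∏ t : Fin (n + 2), (π (σ t).1 (σ t).2).toReal)
        * (∏ t : Fin (n + 1), (d (σ (idx1 (T := n + 2) t)).1 (σ (idx1 (T := n + 2) t)).2
            ((σ (idx2 (T := n + 2) t)).1)).toReal) := rfl
  have hdef' : trajProb h1 p₁ d π τ'
      = (p₁ (τ' ⟨0, h1⟩).1).toReal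
        * (∏ t : Fin (n + 1), (π (τ' t).1 (τ' t).2).toReal)
        * (∏ t : Fin n, (d (τ' (idx1 (T := n + 1) t)).1 (τ' (idx1 (T := n + 1) t)).2
            ((τ' (idx2 (T := n + 1) t)).1)).toReal) := rfl
  have hπ : (∏ t : Fin (n + 2), (π (σ t).1 (σ t).2).toReal)
      = (∏ t : Fin (n + 1), (π (τ' t).1 (τ' t).2).toReal) * (π x.1 x.2).toReal := by
    rw [Fin.prod_univ_castSucc]
    congr 1
    · exact Finset.prod_congr rfl fun t _ => by rw [hcs]
    · rw [hlast]
  have hd : (∏ t : Fin (n + 1), (d (σ (idx1 (T := n + 2) t)).1 (σ (idx1 (T := n + 2) t)).2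
        ((σ (idx2 (T := n + 2) t)).1)).toReal)
      = (∏ t : Fin n, (d (τ' (idx1 (T := n + 1) t)).1 (τ' (idx1 (T := n + 1) t)).2
          ((τ' (idx2 (T := n + 1) t)).1)).toReal)
        * (d (τ' (Fin.last n)).1 (τ' (Fin.last n)).2 x.1).toReal := by
    rw [Fin.prod_univ_castSucc]
    congr 1
    · exact Finset.prod_congr rfl fun t _ => by
        rw [idx1_castSucc, idx2_castSucc, hcs, hcs]
    · rw [idx1_last, idx2_last, hcs, hlast]
  rw [hdef, hdef', hπ, hd, hcs]
  ring

lemma trajProb_base {S A : Type*} (hT : 1 ≤ 1) (p₁ : PMF S) (d : S → A → PMF S)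
    (π : S → PMF A) (τ : Fin 1 → S × A) :
    trajProb hT p₁ d π τ = (p₁ (τ 0).1).toReal * (π (τ 0).1 (τ 0).2).toReal := by
  have hdef : trajProb hT p₁ d π τ
      = (p₁ (τ ⟨0, hT⟩).1).toReal * (∏ t : Fin 1, (π (τ t).1 (τ t).2).toReal)
        * (∏ t : Fin 0, (d (τ (idx1 (T := 1) t)).1 (τ (idx1 (T := 1) t)).2
            ((τ (idx2 (T := 1) t)).1)).toReal) := rfl
  rw [hdef, Fin.prod_univ_one, Fin.prod_univ_zero, mul_one]
  rfl

lemma trajProb_nonneg {S A : Type*} {T : ℕ} (hT : 1 ≤ T) (p₁ : PMF S)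
    (d : S → A → PMF S) (π : S → PMF A) (τ : Fin T → S × A) :
    0 ≤ trajProb hT p₁ d π τ := by
  unfold trajProb
  positivity

lemma sum_trajProb {S A : Type*} [Fintype S] [Fintype A] :
    ∀ (n : ℕ) (hT : 1 ≤ n + 1) (p₁ : PMF S) (d : S → A → PMF S) (π : S → PMF A),
    ∑ τ : Fin (n + 1) → S × A, trajProb hT p₁ d π τ = 1 := by
  intro n
  induction n with
  | zero =>
    intro hT p₁ d π
    rw [← Equiv.sum_comp (Equiv.funUnique (Fin 1) (S × A)).symm (trajProb hT p₁ d π)]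
    have : ∀ x : S × A, trajProb hT p₁ d π ((Equiv.funUnique (Fin 1) (S × A)).symm x)
        = (p₁ x.1).toReal * (π x.1 x.2).toReal := fun x => trajProb_base hT p₁ d π _
    rw [Finset.sum_congr rfl fun x _ => this x]
    exact sum_prod_pmf p₁ π
  | succ m ih =>
    intro hT p₁ d π
    rw [sum_snoc]
    have step : ∀ τ' : Fin (m + 1) → S × A,
        ∑ x : S × A, trajProb hT p₁ d π (Fin.snoc τ' x)
          = trajProb (Nat.le_add_left 1 m) p₁ d π τ' := by
      intro τ'
      have : ∀ x : S × A, trajProb hT p₁ d π (Fin.snoc τ' x)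
          = trajProb (Nat.le_add_left 1 m) p₁ d π τ' *
            ((d (τ' (Fin.last m)).1 (τ' (Fin.last m)).2 x.1).toReal * (π x.1 x.2).toReal) :=
        fun x => by rw [trajProb_snoc hT (Nat.le_add_left 1 m) p₁ d π τ' x]; ring
      rw [Finset.sum_congr rfl fun x _ => this x, ← Finset.mul_sum,
        sum_prod_pmf (d (τ' (Fin.last m)).1 (τ' (Fin.last m)).2) π, mul_one]
    rw [Finset.sum_congr rfl fun τ' _ => step τ']
    exact ih (Nat.le_add_left 1 m) p₁ d π

lemma sum_prod_pmf_weight {S A : Type*} [Fintype S] [Fintype A]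
    (μ : PMF S) (κ : S → PMF A) (g : S → ℝ) :
    ∑ x : S × A, (μ x.1).toReal * ((κ x.1 x.2).toReal * g x.1)
      = ∑ s : S, (μ s).toReal * g s := by
  rw [Fintype.sum_prod_type]
  refine Finset.sum_congr rfl fun s _ => ?_
  dsimp only
  rw [← Finset.mul_sum, ← Finset.sum_mul, pmf_sum_toReal, one_mul]

lemma sum_trajProb_cond {S A : Type*} [Fintype S] [Fintype A] :
    ∀ (n : ℕ) (hT : 1 ≤ n + 1) (p₁ : PMF S) (d : S → A → PMF S) (π : S → PMF A)
      (t : Fin n) (F : S × A → S → ℝ),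
    ∑ τ : Fin (n + 1) → S × A, trajProb hT p₁ d π τ *
        F (τ (idx1 (T := n + 1) t)) ((τ (idx2 (T := n + 1) t)).1)
      = ∑ τ : Fin (n + 1) → S × A, trajProb hT p₁ d π τ *
          ∑ s' : S, (d (τ (idx1 (T := n + 1) t)).1 (τ (idx1 (T := n + 1) t)).2 s').toReal *
            F (τ (idx1 (T := n + 1) t)) s' := by
  intro n
  induction n with
  | zero => intro hT p₁ d π t F; exact t.elim0
  | succ m ih =>
    intro hT p₁ d π t F
    have h1 : 1 ≤ m + 1 := Nat.le_add_left 1 m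
    induction t using Fin.lastCases with
    | last =>
      rw [sum_snoc, sum_snoc
        (fun τ => trajProb hT p₁ d π τ * ∑ s' : S,
          (d (τ (idx1 (T := m + 2) (Fin.last m))).1 (τ (idx1 (T := m + 2) (Fin.last m))).2
            s').toReal * F (τ (idx1 (T := m + 2) (Fin.last m))) s')]
      refine Finset.sum_congr rfl fun τ' _ => ?_
      set sl := τ' (Fin.last m) with hsl
      have hA : ∀ x : S × A, (Fin.snoc τ' x : Fin (m + 2) → S × A) (idx1 (T := m + 2) (Fin.last m)) = sl := fun x => by
        rw [idx1_last, Fin.snoc_castSucc]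
      have hB : ∀ x : S × A, (Fin.snoc τ' x : Fin (m + 2) → S × A) (idx2 (T := m + 2) (Fin.last m)) = x := fun x => by
        rw [idx2_last, Fin.snoc_last]
      -- LHS
      have hL : ∑ x : S × A, trajProb hT p₁ d π (Fin.snoc τ' x) *
            F ((Fin.snoc τ' x : Fin (m + 2) → S × A) (idx1 (T := m + 2) (Fin.last m)))
              (((Fin.snoc τ' x : Fin (m + 2) → S × A) (idx2 (T := m + 2) (Fin.last m))).1)
          = trajProb h1 p₁ d π τ' * ∑ s' : S, (d sl.1 sl.2 s').toReal * F sl s' := by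
        have e : ∀ x : S × A, trajProb hT p₁ d π (Fin.snoc τ' x) *
              F ((Fin.snoc τ' x : Fin (m + 2) → S × A) (idx1 (T := m + 2) (Fin.last m)))
                (((Fin.snoc τ' x : Fin (m + 2) → S × A) (idx2 (T := m + 2) (Fin.last m))).1)
            = trajProb h1 p₁ d π τ' *
                ((d sl.1 sl.2 x.1).toReal * ((π x.1 x.2).toReal * F sl x.1)) := fun x => by
          rw [trajProb_snoc hT h1, hA, hB]; ring
        rw [Finset.sum_congr rfl fun x _ => e x, ← Finset.mul_sum,
          sum_prod_pmf_weight (d sl.1 sl.2) π (fun s' => F sl s')]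
      -- RHS
      have hR : ∑ x : S × A, trajProb hT p₁ d π (Fin.snoc τ' x) *
            ∑ s' : S, (d ((Fin.snoc τ' x : Fin (m + 2) → S × A) (idx1 (T := m + 2) (Fin.last m))).1
              ((Fin.snoc τ' x : Fin (m + 2) → S × A) (idx1 (T := m + 2) (Fin.last m))).2 s').toReal *
              F ((Fin.snoc τ' x : Fin (m + 2) → S × A) (idx1 (T := m + 2) (Fin.last m))) s'
          = trajProb h1 p₁ d π τ' * ∑ s' : S, (d sl.1 sl.2 s').toReal * F sl s' := by
        have e : ∀ x : S × A, trajProb hT p₁ d π (Fin.snoc τ' x) *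
              ∑ s' : S, (d ((Fin.snoc τ' x : Fin (m + 2) → S × A) (idx1 (T := m + 2) (Fin.last m))).1
                ((Fin.snoc τ' x : Fin (m + 2) → S × A) (idx1 (T := m + 2) (Fin.last m))).2 s').toReal *
                F ((Fin.snoc τ' x : Fin (m + 2) → S × A) (idx1 (T := m + 2) (Fin.last m))) s'
            = trajProb h1 p₁ d π τ' *
                ((d sl.1 sl.2 x.1).toReal * ((π x.1 x.2).toReal *
                  (∑ s' : S, (d sl.1 sl.2 s').toReal * F sl s'))) := fun x => by
          rw [trajProb_snoc hT h1, hA]; ring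
        rw [Finset.sum_congr rfl fun x _ => e x, ← Finset.mul_sum,
          sum_prod_pmf_weight (d sl.1 sl.2) π
            (fun _ => ∑ s' : S, (d sl.1 sl.2 s').toReal * F sl s'),
          ← Finset.sum_mul, pmf_sum_toReal, one_mul]
      rw [hL, hR]
    | cast t' =>
      have hA : ∀ (τ' : Fin (m + 1) → S × A) (x : S × A),
          (Fin.snoc τ' x : Fin (m + 2) → S × A) (idx1 (T := m + 2) (Fin.castSucc t')) = τ' (idx1 (T := m + 1) t') :=
        fun τ' x => by rw [idx1_castSucc, Fin.snoc_castSucc]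
      have hB : ∀ (τ' : Fin (m + 1) → S × A) (x : S × A),
          (Fin.snoc τ' x : Fin (m + 2) → S × A) (idx2 (T := m + 2) (Fin.castSucc t')) = τ' (idx2 (T := m + 1) t') :=
        fun τ' x => by rw [idx2_castSucc, Fin.snoc_castSucc]
      rw [sum_snoc, sum_snoc
        (fun τ => trajProb hT p₁ d π τ * ∑ s' : S,
          (d (τ (idx1 (T := m + 2) (Fin.castSucc t'))).1
            (τ (idx1 (T := m + 2) (Fin.castSucc t'))).2 s').toReal *
            F (τ (idx1 (T := m + 2) (Fin.castSucc t'))) s')]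
      have hL : ∀ τ' : Fin (m + 1) → S × A,
          ∑ x : S × A, trajProb hT p₁ d π (Fin.snoc τ' x) *
              F ((Fin.snoc τ' x : Fin (m + 2) → S × A) (idx1 (T := m + 2) (Fin.castSucc t')))
                (((Fin.snoc τ' x : Fin (m + 2) → S × A) (idx2 (T := m + 2) (Fin.castSucc t'))).1)
          = trajProb h1 p₁ d π τ' *
              F (τ' (idx1 (T := m + 1) t')) ((τ' (idx2 (T := m + 1) t')).1) := by
        intro τ'
        have e : ∀ x : S × A, trajProb hT p₁ d π (Fin.snoc τ' x) *
              F ((Fin.snoc τ' x : Fin (m + 2) → S × A) (idx1 (T := m + 2) (Fin.castSucc t')))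
                (((Fin.snoc τ' x : Fin (m + 2) → S × A) (idx2 (T := m + 2) (Fin.castSucc t'))).1)
            = trajProb h1 p₁ d π τ' *
                F (τ' (idx1 (T := m + 1) t')) ((τ' (idx2 (T := m + 1) t')).1) *
                ((d (τ' (Fin.last m)).1 (τ' (Fin.last m)).2 x.1).toReal *
                  ((π x.1 x.2).toReal * 1)) := fun x => by
          rw [trajProb_snoc hT h1, hA, hB]; ring
        rw [Finset.sum_congr rfl fun x _ => e x, ← Finset.mul_sum,
          sum_prod_pmf_weight (d (τ' (Fin.last m)).1 (τ' (Fin.last m)).2) π (fun _ => 1),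
          ← Finset.sum_mul, pmf_sum_toReal, one_mul, mul_one]
      have hR : ∀ τ' : Fin (m + 1) → S × A,
          ∑ x : S × A, trajProb hT p₁ d π (Fin.snoc τ' x) *
              ∑ s' : S, (d ((Fin.snoc τ' x : Fin (m + 2) → S × A) (idx1 (T := m + 2) (Fin.castSucc t'))).1
                ((Fin.snoc τ' x : Fin (m + 2) → S × A) (idx1 (T := m + 2) (Fin.castSucc t'))).2 s').toReal *
                F ((Fin.snoc τ' x : Fin (m + 2) → S × A) (idx1 (T := m + 2) (Fin.castSucc t'))) s'
          = trajProb h1 p₁ d π τ' *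
              ∑ s' : S, (d (τ' (idx1 (T := m + 1) t')).1 (τ' (idx1 (T := m + 1) t')).2
                s').toReal * F (τ' (idx1 (T := m + 1) t')) s' := by
        intro τ'
        have e : ∀ x : S × A, trajProb hT p₁ d π (Fin.snoc τ' x) *
              ∑ s' : S, (d ((Fin.snoc τ' x : Fin (m + 2) → S × A) (idx1 (T := m + 2) (Fin.castSucc t'))).1
                ((Fin.snoc τ' x : Fin (m + 2) → S × A) (idx1 (T := m + 2) (Fin.castSucc t'))).2 s').toReal *
                F ((Fin.snoc τ' x : Fin (m + 2) → S × A) (idx1 (T := m + 2) (Fin.castSucc t'))) s'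
            = trajProb h1 p₁ d π τ' *
                (∑ s' : S, (d (τ' (idx1 (T := m + 1) t')).1 (τ' (idx1 (T := m + 1) t')).2
                  s').toReal * F (τ' (idx1 (T := m + 1) t')) s') *
                ((d (τ' (Fin.last m)).1 (τ' (Fin.last m)).2 x.1).toReal *
                  ((π x.1 x.2).toReal * 1)) := fun x => by
          rw [trajProb_snoc hT h1, hA]; ring
        rw [Finset.sum_congr rfl fun x _ => e x, ← Finset.mul_sum,
          sum_prod_pmf_weight (d (τ' (Fin.last m)).1 (τ' (Fin.last m)).2) π (fun _ => 1),
          ← Finset.sum_mul, pmf_sum_toReal, one_mul, mul_one]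
      rw [Finset.sum_congr rfl fun τ' _ => hL τ', Finset.sum_congr rfl fun τ' _ => hR τ']
      exact ih h1 p₁ d π t' F

lemma klTraj_eq_expKL {S A : Type*} [Fintype S] [Fintype A] {n : ℕ} (hT : 1 ≤ n + 1)
    (p₁ : PMF S) (qd pd : S → A → PMF S)
    (hq : ∀ s a s', 0 < qd s a s') (hp : ∀ s a s', 0 < pd s a s') (π : S → PMF A) :
    ∑ τ : Fin (n + 1) → S × A, trajProb hT p₁ qd π τ *
        Real.log (trajProb hT p₁ qd π τ / trajProb hT p₁ pd π τ)
      = expKL hT p₁ qd pd π := by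
  have hqpos : ∀ (s : S) (a : A) (s' : S), (0:ℝ) < (qd s a s').toReal :=
    fun s a s' => ENNReal.toReal_pos (hq s a s').ne' (PMF.apply_ne_top _ _)
  have hppos : ∀ (s : S) (a : A) (s' : S), (0:ℝ) < (pd s a s').toReal :=
    fun s a s' => ENNReal.toReal_pos (hp s a s').ne' (PMF.apply_ne_top _ _)
  set F : S × A → S → ℝ := fun sa s' =>
    Real.log (qd sa.1 sa.2 s').toReal - Real.log (pd sa.1 sa.2 s').toReal with hF
  have point : ∀ τ : Fin (n + 1) → S × A,
      trajProb hT p₁ qd π τ * Real.log (trajProb hT p₁ qd π τ / trajProb hT p₁ pd π τ)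
        = trajProb hT p₁ qd π τ * ∑ t : Fin n,
            F (τ (idx1 (T := n + 1) t)) ((τ (idx2 (T := n + 1) t)).1) := by
    intro τ
    rcases eq_or_lt_of_le (trajProb_nonneg hT p₁ qd π τ) with h0 | hpos
    · rw [← h0, zero_mul, zero_mul]
    · congr 1
      have hqd : trajProb hT p₁ qd π τ
          = (p₁ (τ ⟨0, hT⟩).1).toReal * (∏ t : Fin (n + 1), (π (τ t).1 (τ t).2).toReal)
            * (∏ t : Fin n, (qd (τ (idx1 (T := n + 1) t)).1 (τ (idx1 (T := n + 1) t)).2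
                ((τ (idx2 (T := n + 1) t)).1)).toReal) := rfl
      have hpd : trajProb hT p₁ pd π τ
          = (p₁ (τ ⟨0, hT⟩).1).toReal * (∏ t : Fin (n + 1), (π (τ t).1 (τ t).2).toReal)
            * (∏ t : Fin n, (pd (τ (idx1 (T := n + 1) t)).1 (τ (idx1 (T := n + 1) t)).2
                ((τ (idx2 (T := n + 1) t)).1)).toReal) := rfl
      have hQd : 0 < ∏ t : Fin n, (qd (τ (idx1 (T := n + 1) t)).1 (τ (idx1 (T := n + 1) t)).2
          ((τ (idx2 (T := n + 1) t)).1)).toReal :=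
        Finset.prod_pos fun t _ => hqpos _ _ _
      have hPd : 0 < ∏ t : Fin n, (pd (τ (idx1 (T := n + 1) t)).1 (τ (idx1 (T := n + 1) t)).2
          ((τ (idx2 (T := n + 1) t)).1)).toReal :=
        Finset.prod_pos fun t _ => hppos _ _ _
      have hP0Pπ : 0 < (p₁ (τ ⟨0, hT⟩).1).toReal
          * (∏ t : Fin (n + 1), (π (τ t).1 (τ t).2).toReal) := by
        have h := hpos
        rw [hqd] at h
        nlinarith
      have hpne : trajProb hT p₁ pd π τ ≠ 0 := by
        rw [hpd]; exact ne_of_gt (mul_pos hP0Pπ hPd)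
      rw [Real.log_div (ne_of_gt hpos) hpne, hqd, hpd,
        Real.log_mul (ne_of_gt hP0Pπ) (ne_of_gt hQd),
        Real.log_mul (ne_of_gt hP0Pπ) (ne_of_gt hPd),
        Real.log_prod (fun t _ => (hqpos _ _ _).ne'),
        Real.log_prod (fun t _ => (hppos _ _ _).ne'), hF]
      rw [Finset.sum_sub_distrib]
      ring
  rw [Finset.sum_congr rfl fun τ _ => point τ]
  have hexp : expKL hT p₁ qd pd π = ∑ τ : Fin (n + 1) → S × A, trajProb hT p₁ qd π τ *
      ∑ t : Fin n, KL (qd (τ (idx1 (T := n + 1) t)).1 (τ (idx1 (T := n + 1) t)).2)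
        (pd (τ (idx1 (T := n + 1) t)).1 (τ (idx1 (T := n + 1) t)).2) := rfl
  rw [hexp]
  have hKL : ∀ sa : S × A, KL (qd sa.1 sa.2) (pd sa.1 sa.2)
      = ∑ s' : S, (qd sa.1 sa.2 s').toReal * F sa s' := by
    intro sa
    unfold KL
    exact Finset.sum_congr rfl fun s' _ => by
      rw [hF, Real.log_div (hqpos _ _ _).ne' (hppos _ _ _).ne']
  calc ∑ τ : Fin (n + 1) → S × A, trajProb hT p₁ qd π τ *
          ∑ t : Fin n, F (τ (idx1 (T := n + 1) t)) ((τ (idx2 (T := n + 1) t)).1)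
      = ∑ τ : Fin (n + 1) → S × A, ∑ t : Fin n, trajProb hT p₁ qd π τ *
          F (τ (idx1 (T := n + 1) t)) ((τ (idx2 (T := n + 1) t)).1) :=
        Finset.sum_congr rfl fun τ _ => Finset.mul_sum _ _ _
    _ = ∑ t : Fin n, ∑ τ : Fin (n + 1) → S × A, trajProb hT p₁ qd π τ *
          F (τ (idx1 (T := n + 1) t)) ((τ (idx2 (T := n + 1) t)).1) := Finset.sum_comm
    _ = ∑ t : Fin n, ∑ τ : Fin (n + 1) → S × A, trajProb hT p₁ qd π τ *
          ∑ s' : S, (qd (τ (idx1 (T := n + 1) t)).1 (τ (idx1 (T := n + 1) t)).2 s').toReal *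
            F (τ (idx1 (T := n + 1) t)) s' :=
        Finset.sum_congr rfl fun t _ => sum_trajProb_cond n hT p₁ qd π t F
    _ = ∑ τ : Fin (n + 1) → S × A, ∑ t : Fin n, trajProb hT p₁ qd π τ *
          ∑ s' : S, (qd (τ (idx1 (T := n + 1) t)).1 (τ (idx1 (T := n + 1) t)).2 s').toReal *
            F (τ (idx1 (T := n + 1) t)) s' := Finset.sum_comm
    _ = ∑ τ : Fin (n + 1) → S × A, trajProb hT p₁ qd π τ *
          ∑ t : Fin n, KL (qd (τ (idx1 (T := n + 1) t)).1 (τ (idx1 (T := n + 1) t)).2)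
            (pd (τ (idx1 (T := n + 1) t)).1 (τ (idx1 (T := n + 1) t)).2) := by
        refine Finset.sum_congr rfl fun τ _ => ?_
        rw [Finset.mul_sum]
        exact Finset.sum_congr rfl fun t _ => by rw [hKL]

lemma trajProb_zero_imp {S A : Type*} {n : ℕ} (hT : 1 ≤ n + 1)
    (p₁ : PMF S) (qd pd : S → A → PMF S)
    (hq : ∀ s a s', 0 < qd s a s') (hp : ∀ s a s', 0 < pd s a s') (π : S → PMF A)
    (τ : Fin (n + 1) → S × A) [Fintype S] [Fintype A]
    (h : trajProb hT p₁ pd π τ = 0) : trajProb hT p₁ qd π τ = 0 := by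
  have hqd : trajProb hT p₁ qd π τ
      = (p₁ (τ ⟨0, hT⟩).1).toReal * (∏ t : Fin (n + 1), (π (τ t).1 (τ t).2).toReal)
        * (∏ t : Fin n, (qd (τ (idx1 (T := n + 1) t)).1 (τ (idx1 (T := n + 1) t)).2
            ((τ (idx2 (T := n + 1) t)).1)).toReal) := rfl
  have hpd : trajProb hT p₁ pd π τ
      = (p₁ (τ ⟨0, hT⟩).1).toReal * (∏ t : Fin (n + 1), (π (τ t).1 (τ t).2).toReal)
        * (∏ t : Fin n, (pd (τ (idx1 (T := n + 1) t)).1 (τ (idx1 (T := n + 1) t)).2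
            ((τ (idx2 (T := n + 1) t)).1)).toReal) := rfl
  rw [hpd] at h
  have hPd : (∏ t : Fin n, (pd (τ (idx1 (T := n + 1) t)).1 (τ (idx1 (T := n + 1) t)).2
      ((τ (idx2 (T := n + 1) t)).1)).toReal) ≠ 0 :=
    ne_of_gt (Finset.prod_pos fun t _ =>
      ENNReal.toReal_pos (hp _ _ _).ne' (PMF.apply_ne_top _ _))
  rcases mul_eq_zero.mp h with h' | h'
  · rw [hqd, h', zero_mul]
  · exact absurd h' hPd

lemma J_diff_bound {S A : Type*} [Fintype S] [Fintype A] {n : ℕ} (hT : 1 ≤ n + 1)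
    (p₁ : PMF S) (qd pd : S → A → PMF S)
    (hq : ∀ s a s', 0 < qd s a s') (hp : ∀ s a s', 0 < pd s a s')
    (r : S → A → ℝ) (ε Rmax : ℝ) (hε : 0 ≤ ε) (hR : 0 ≤ Rmax) (π : S → PMF A)
    (hπ : expKL hT p₁ qd pd π ≤ ε)
    (hb : ∀ τ : Fin (n + 1) → S × A,
      (0 < trajProb hT p₁ qd π τ ∨ 0 < trajProb hT p₁ pd π τ) → |entReturn r π τ| ≤ Rmax) :
    |(∑ τ : Fin (n + 1) → S × A, trajProb hT p₁ pd π τ * entReturn r π τ)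
      - ∑ τ : Fin (n + 1) → S × A, trajProb hT p₁ qd π τ * entReturn r π τ|
      ≤ 2 * Rmax * Real.sqrt (ε / 2) := by
  have h1 : |(∑ τ : Fin (n + 1) → S × A, trajProb hT p₁ pd π τ * entReturn r π τ)
      - ∑ τ : Fin (n + 1) → S × A, trajProb hT p₁ qd π τ * entReturn r π τ|
      ≤ (∑ τ : Fin (n + 1) → S × A,
          |trajProb hT p₁ qd π τ - trajProb hT p₁ pd π τ|) * Rmax := by
    rw [← Finset.sum_sub_distrib, Finset.sum_mul]
    refine (Finset.abs_sum_le_sum_abs _ _).trans (Finset.sum_le_sum fun τ _ => ?_)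
    rw [← sub_mul, abs_mul, abs_sub_comm]
    rcases eq_or_lt_of_le (trajProb_nonneg hT p₁ qd π τ) with h0q | hposq
    · rcases eq_or_lt_of_le (trajProb_nonneg hT p₁ pd π τ) with h0p | hposp
      · rw [← h0q, ← h0p]
        simp
      · exact mul_le_mul_of_nonneg_left (hb τ (Or.inr hposp)) (abs_nonneg _)
    · exact mul_le_mul_of_nonneg_left (hb τ (Or.inl hposq)) (abs_nonneg _)
  have h2 : ∑ τ : Fin (n + 1) → S × A,
        |trajProb hT p₁ qd π τ - trajProb hT p₁ pd π τ|
      ≤ Real.sqrt (2 * ∑ τ : Fin (n + 1) → S × A, trajProb hT p₁ qd π τ *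
          Real.log (trajProb hT p₁ qd π τ / trajProb hT p₁ pd π τ)) :=
    pinsker_finite _ _ (fun τ => trajProb_nonneg hT p₁ qd π τ)
      (fun τ => trajProb_nonneg hT p₁ pd π τ)
      (sum_trajProb n hT p₁ qd π) (sum_trajProb n hT p₁ pd π)
      (fun τ => trajProb_zero_imp hT p₁ qd pd hq hp π τ)
  rw [klTraj_eq_expKL hT p₁ qd pd hq hp π] at h2
  have h3 : Real.sqrt (2 * expKL hT p₁ qd pd π) ≤ 2 * Real.sqrt (ε / 2) := by
    have e2 : Real.sqrt (2 * ε) = 2 * Real.sqrt (ε / 2) := by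
      rw [show (2:ℝ) * ε = 2 ^ 2 * (ε / 2) by ring,
        Real.sqrt_mul (by positivity) (ε / 2), Real.sqrt_sq (by norm_num : (0:ℝ) ≤ 2)]
    rw [← e2]
    exact Real.sqrt_le_sqrt (by linarith)
  have habs : 0 ≤ ∑ τ : Fin (n + 1) → S × A,
      |trajProb hT p₁ qd π τ - trajProb hT p₁ pd π τ| :=
    Finset.sum_nonneg fun τ _ => abs_nonneg _
  calc |(∑ τ : Fin (n + 1) → S × A, trajProb hT p₁ pd π τ * entReturn r π τ)
        - ∑ τ : Fin (n + 1) → S × A, trajProb hT p₁ qd π τ * entReturn r π τ|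
      ≤ (∑ τ : Fin (n + 1) → S × A,
          |trajProb hT p₁ qd π τ - trajProb hT p₁ pd π τ|) * Rmax := h1
    _ ≤ (2 * Real.sqrt (ε / 2)) * Rmax :=
        mul_le_mul_of_nonneg_right (le_trans h2 h3) hR
    _ = 2 * Rmax * Real.sqrt (ε / 2) := by ring

theorem darc_near_optimal {S A : Type*} [Fintype S] [Fintype A]
    [Nonempty S] [Nonempty A] {T : ℕ} (hT : 1 ≤ T)
    (p₁ : PMF S) (qdyn pdyn : S → A → PMF S)
    (hq : ∀ s a s', 0 < qdyn s a s') (hp : ∀ s a s', 0 < pdyn s a s')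
    (r : S → A → ℝ)
    (ε Rmax : ℝ) (hε : 0 ≤ ε) (hR : 0 ≤ Rmax)
    (hbound : ∀ π : S → PMF A, expKL hT p₁ qdyn pdyn π ≤ ε →
      ∀ τ : Fin T → S × A,
        (0 < trajProb hT p₁ qdyn π τ ∨ 0 < trajProb hT p₁ pdyn π τ) →
        |entReturn r π τ| ≤ Rmax)
    (πDARC πstar : S → PMF A)
    (hDARC : expKL hT p₁ qdyn pdyn πDARC ≤ ε)
    (hstar : expKL hT p₁ qdyn pdyn πstar ≤ ε)
    (hmax : ∀ π : S → PMF A, expKL hT p₁ qdyn pdyn π ≤ ε →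
      (∑ τ : Fin T → S × A, trajProb hT p₁ qdyn π τ * entReturn r π τ)
        ≤ ∑ τ : Fin T → S × A, trajProb hT p₁ qdyn πDARC τ * entReturn r πDARC τ) :
    (∑ τ : Fin T → S × A, trajProb hT p₁ pdyn πDARC τ * entReturn r πDARC τ)
      ≥ (∑ τ : Fin T → S × A, trajProb hT p₁ pdyn πstar τ * entReturn r πstar τ)
        - 4 * Rmax * Real.sqrt (ε / 2) := by
  obtain ⟨n, rfl⟩ : ∃ n, T = n + 1 := ⟨T - 1, by omega⟩
  have hD := J_diff_bound hT p₁ qdyn pdyn hq hp r ε Rmax hε hR πDARC hDARC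
    (hbound πDARC hDARC)
  have hS := J_diff_bound hT p₁ qdyn pdyn hq hp r ε Rmax hε hR πstar hstar
    (hbound πstar hstar)
  have hM := hmax πstar hstar
  rw [abs_le] at hD hS
  obtain ⟨hD1, hD2⟩ := hD
  obtain ⟨hS1, hS2⟩ := hS
  linarith
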